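/- Let M₀, M₁ be symmetric positive-definite real n×n matrices with decompositions M₀ = C₀ᵀC₀ and M₁ = C₁ᵀC₁ (C₀, C₁ invertible). Let f : ℝⁿ → ℝⁿ be continuously differentiable (representing the time-t₁ solution map of the ODE x′ = F(t,x) started at time t₀), let x₀ ∈ ℝⁿ, δ₀ > 0, and let X = B_{M₀}(x₀, δ₀) be the closed ball of radius δ₀ about x₀ in the M₀-norm. Suppose D ⊂ ℝ^{n×n} is a set such that Df(x) ∈ D for all x ∈ X, and Λ > 0 satisfies Λ ≥ sqrt(λ_max((C₀ᵀ)⁻¹·Dᵀ·M₁·D·C₀⁻¹)) for all D ∈ D. Then for every x ∈ X, f(x) ∈ B_{M₁}(f(x₀), Λ·δ₀). -/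

import Mathlib

open Matrix

/-- Largest eigenvalue of a real matrix, as the supremum of its real spectrum. -/
noncomputable def lambdaMax {n : ℕ} (S : Matrix (Fin n) (Fin n) ℝ) : ℝ :=
  sSup (spectrum ℝ S)

/-- Weighted `M`-norm of a vector: `‖y‖_M = sqrt (yᵀ M y)`. -/
noncomputable def Mnorm {n : ℕ} (M : Matrix (Fin n) (Fin n) ℝ) (y : Fin n → ℝ) : ℝ :=
  Real.sqrt (y ⬝ᵥ (M *ᵥ y))

/-- Closed ball of radius `δ` about `x` in the `M`-norm. -/
def Mball {n : ℕ} (M : Matrix (Fin n) (Fin n) ℝ) (x : Fin n → ℝ) (δ : ℝ) :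
    Set (Fin n → ℝ) :=
  {y | Mnorm M (y - x) ≤ δ}

/-- Jacobian matrix of `f : ℝⁿ → ℝⁿ` at `x`. -/
noncomputable def jacobian {n : ℕ} (f : (Fin n → ℝ) → (Fin n → ℝ)) (x : Fin n → ℝ) :
    Matrix (Fin n) (Fin n) ℝ :=
  LinearMap.toMatrix' (fderiv ℝ f x).toLinearMap

lemma rayleigh {n : ℕ} (S : Matrix (Fin n) (Fin n) ℝ) (hS : S.IsHermitian)
    (w : Fin n → ℝ) :
    w ⬝ᵥ (S *ᵥ w) ≤ sSup (spectrum ℝ S) * (w ⬝ᵥ w) := by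
  have hbdd : BddAbove (spectrum ℝ S) := (Matrix.finite_real_spectrum (A := S)).bddAbove
  have hle : ∀ i, hS.eigenvalues i ≤ sSup (spectrum ℝ S) := fun i =>
    le_csSup hbdd (hS.eigenvalues_mem_spectrum_real i)
  set U : Matrix (Fin n) (Fin n) ℝ := (hS.eigenvectorUnitary : Matrix (Fin n) (Fin n) ℝ) with hUdef
  have hU1 : U * star U = 1 := (Unitary.mem_iff.mp hS.eigenvectorUnitary.2).2
  set c : Fin n → ℝ := Uᵀ *ᵥ w with hc
  have hstar : star U = Uᵀ := rfl
  have hspec : S = U * diagonal hS.eigenvalues * Uᵀ := by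
    have := hS.spectral_theorem
    rw [Unitary.conjStarAlgAut_apply, hstar] at this
    have h' : (RCLike.ofReal ∘ hS.eigenvalues : Fin n → ℝ) = hS.eigenvalues := by
      ext i; simp
    rwa [h'] at this
  have h1 : w ⬝ᵥ (S *ᵥ w) = ∑ i, hS.eigenvalues i * (c i)^2 := by
    have : w ⬝ᵥ (S *ᵥ w) = c ⬝ᵥ (diagonal hS.eigenvalues *ᵥ c) := by
      conv_lhs => rw [hspec]
      rw [← mulVec_mulVec, ← mulVec_mulVec, dotProduct_mulVec w U]
      rw [show w ᵥ* U = c by rw [hc, ← vecMul_transpose, transpose_transpose]]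
    rw [this]
    simp only [dotProduct, mulVec_diagonal]
    exact Finset.sum_congr rfl fun i _ => by ring
  have h2 : c ⬝ᵥ c = w ⬝ᵥ w := by
    rw [hc, dotProduct_mulVec, vecMul_transpose, mulVec_mulVec, ← hstar, hU1, one_mulVec]
  calc w ⬝ᵥ (S *ᵥ w) = ∑ i, hS.eigenvalues i * (c i)^2 := h1
    _ ≤ ∑ i, sSup (spectrum ℝ S) * (c i)^2 := by
        apply Finset.sum_le_sum
        intro i _
        exact mul_le_mul_of_nonneg_right (hle i) (sq_nonneg _)
    _ = sSup (spectrum ℝ S) * (c ⬝ᵥ c) := by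
        rw [← Finset.mul_sum]; congr 1; simp [dotProduct, sq]
    _ = _ := by rw [h2]

lemma euclid_norm {n : ℕ} (z : Fin n → ℝ) :
    ‖((PiLp.continuousLinearEquiv 2 ℝ (fun _ : Fin n => ℝ)).symm z : EuclideanSpace ℝ (Fin n))‖
      = Real.sqrt (z ⬝ᵥ z) := by
  rw [EuclideanSpace.norm_eq]
  congr 1
  simp [dotProduct, sq]

lemma opbound {n : ℕ} (B : Matrix (Fin n) (Fin n) ℝ) (Λ : ℝ)
    (hB : Real.sqrt (sSup (spectrum ℝ (Bᵀ * B))) ≤ Λ) (z : Fin n → ℝ) :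
    Real.sqrt ((B *ᵥ z) ⬝ᵥ (B *ᵥ z)) ≤ Λ * Real.sqrt (z ⬝ᵥ z) := by
  have hherm : (Bᵀ * B).IsHermitian := by
    have := Matrix.isHermitian_conjTranspose_mul_self B
    simpa using this
  have h1 : (B *ᵥ z) ⬝ᵥ (B *ᵥ z) = z ⬝ᵥ ((Bᵀ * B) *ᵥ z) := by
    rw [← mulVec_mulVec, dotProduct_mulVec z Bᵀ, vecMul_transpose]
  have hzz : (0:ℝ) ≤ z ⬝ᵥ z := by
    simp only [dotProduct]
    exact Finset.sum_nonneg fun i _ => mul_self_nonneg _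
  calc Real.sqrt ((B *ᵥ z) ⬝ᵥ (B *ᵥ z))
      ≤ Real.sqrt (sSup (spectrum ℝ (Bᵀ * B)) * (z ⬝ᵥ z)) := by
        apply Real.sqrt_le_sqrt
        rw [h1]
        exact rayleigh _ hherm z
    _ = Real.sqrt (sSup (spectrum ℝ (Bᵀ * B))) * Real.sqrt (z ⬝ᵥ z) :=
        Real.sqrt_mul' _ hzz
    _ ≤ Λ * Real.sqrt (z ⬝ᵥ z) :=
        mul_le_mul_of_nonneg_right hB (Real.sqrt_nonneg _)

lemma mnorm_eq {n : ℕ} (M C : Matrix (Fin n) (Fin n) ℝ) (hC : Cᵀ * C = M)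
    (v : Fin n → ℝ) :
    Mnorm M v = ‖((PiLp.continuousLinearEquiv 2 ℝ (fun _ : Fin n => ℝ)).symm (C *ᵥ v) :
      EuclideanSpace ℝ (Fin n))‖ := by
  rw [euclid_norm, Mnorm]
  congr 1
  rw [← hC, ← mulVec_mulVec, dotProduct_mulVec v Cᵀ, vecMul_transpose]

theorem ball_propagation {n : ℕ} (M₀ M₁ C₀ C₁ : Matrix (Fin n) (Fin n) ℝ)
    (hM₀ : M₀.PosDef) (hM₁ : M₁.PosDef)
    (hC₀ : IsUnit C₀.det) (hC₁ : IsUnit C₁.det)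
    (hCM₀ : C₀ᵀ * C₀ = M₀) (hCM₁ : C₁ᵀ * C₁ = M₁)
    (f : (Fin n → ℝ) → (Fin n → ℝ)) (hf : ContDiff ℝ 1 f)
    (x₀ : Fin n → ℝ) (δ₀ : ℝ) (hδ₀ : 0 < δ₀)
    (D : Set (Matrix (Fin n) (Fin n) ℝ))
    (hD : ∀ x ∈ Mball M₀ x₀ δ₀, jacobian f x ∈ D)
    (Λ : ℝ) (hΛpos : 0 < Λ)
    (hΛ : ∀ A ∈ D, Real.sqrt (lambdaMax ((C₀ᵀ)⁻¹ * Aᵀ * M₁ * A * C₀⁻¹)) ≤ Λ) :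
    ∀ x ∈ Mball M₀ x₀ δ₀, f x ∈ Mball M₁ (f x₀) (Λ * δ₀) := by
  intro x hx
  set φ := PiLp.continuousLinearEquiv 2 ℝ (fun _ : Fin n => ℝ) with hφ
  set E := EuclideanSpace ℝ (Fin n)
  -- matrix continuous linear maps
  let tc : Matrix (Fin n) (Fin n) ℝ → (Fin n → ℝ) →L[ℝ] (Fin n → ℝ) :=
    fun A => LinearMap.toContinuousLinearMap A.mulVecLin
  have htc : ∀ A v, tc A v = A *ᵥ v := fun A v => rfl
  -- the map on Euclidean space
  set p : E → (Fin n → ℝ) := fun u => x₀ + C₀⁻¹ *ᵥ (φ u) with hp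
  set Tin : E →L[ℝ] (Fin n → ℝ) := (tc C₀⁻¹).comp (φ : E →L[ℝ] (Fin n → ℝ)) with hTin
  set Tout : (Fin n → ℝ) →L[ℝ] E := ((φ.symm : (Fin n → ℝ) ≃L[ℝ] E) :
      (Fin n → ℝ) →L[ℝ] E).comp (tc C₁) with hTout
  set g : E → E := fun u => Tout (f (p u)) with hg
  have hC₀inv : C₀ * C₀⁻¹ = 1 := Matrix.mul_nonsing_inv _ hC₀
  have hC₀inv' : C₀⁻¹ * C₀ = 1 := Matrix.nonsing_inv_mul _ hC₀
  -- derivative of g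
  have hgderiv : ∀ u : E, HasFDerivAt g ((Tout.comp (fderiv ℝ f (p u))).comp Tin) u := by
    intro u
    have h1 : HasFDerivAt p Tin u := by
      have : HasFDerivAt (fun u : E => Tin u) Tin u := Tin.hasFDerivAt
      exact (this.const_add x₀)
    have h2 : HasFDerivAt f (fderiv ℝ f (p u)) (p u) :=
      (hf.differentiable one_ne_zero (p u)).hasFDerivAt
    exact (Tout.hasFDerivAt.comp (p u) h2).comp u h1
  -- points of the Euclidean ball map into the M₀-ball
  have hmem : ∀ u ∈ Metric.closedBall (0 : E) δ₀, p u ∈ Mball M₀ x₀ δ₀ := by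
    intro u hu
    have : Mnorm M₀ (p u - x₀) = ‖u‖ := by
      rw [hp]
      simp only [add_sub_cancel_left]
      rw [mnorm_eq M₀ C₀ hCM₀, mulVec_mulVec, hC₀inv, one_mulVec]
      rw [← hφ]
      simp
    simp only [Mball, Set.mem_setOf_eq, this]
    simpa using hu
  -- norm bound on the derivative of g
  have hbound : ∀ u ∈ Metric.closedBall (0 : E) δ₀, ‖fderiv ℝ g u‖ ≤ Λ := by
    intro u hu
    rw [(hgderiv u).fderiv]
    apply ContinuousLinearMap.opNorm_le_bound _ hΛpos.le
    intro w
    set A := jacobian f (p u) with hA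
    have hAD : A ∈ D := hD _ (hmem u hu)
    have hAapp : ∀ v, A *ᵥ v = fderiv ℝ f (p u) v := by
      intro v
      have := Matrix.toLin'_toMatrix' ((fderiv ℝ f (p u)).toLinearMap)
      calc A *ᵥ v = Matrix.toLin' A v := (Matrix.toLin'_apply _ _).symm
        _ = fderiv ℝ f (p u) v := by rw [hA, jacobian, this]; rfl
    set B := C₁ * A * C₀⁻¹ with hB
    have happ : ((Tout.comp (fderiv ℝ f (p u))).comp Tin) w
        = φ.symm (B *ᵥ (φ w)) := by
      have : ((Tout.comp (fderiv ℝ f (p u))).comp Tin) w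
          = φ.symm (C₁ *ᵥ (fderiv ℝ f (p u) (C₀⁻¹ *ᵥ φ w))) := rfl
      rw [this, ← hAapp, mulVec_mulVec, mulVec_mulVec]
    have hBtB : Bᵀ * B = (C₀ᵀ)⁻¹ * Aᵀ * M₁ * A * C₀⁻¹ := by
      rw [hB, ← hCM₁]
      rw [transpose_mul, transpose_mul, transpose_nonsing_inv]
      simp only [Matrix.mul_assoc]
    have hΛB : Real.sqrt (sSup (spectrum ℝ (Bᵀ * B))) ≤ Λ := by
      rw [hBtB]
      exact hΛ A hAD
    calc ‖((Tout.comp (fderiv ℝ f (p u))).comp Tin) w‖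
        = Real.sqrt ((B *ᵥ φ w) ⬝ᵥ (B *ᵥ φ w)) := by rw [happ, euclid_norm]
      _ ≤ Λ * Real.sqrt ((φ w) ⬝ᵥ (φ w)) := opbound B Λ hΛB _
      _ = Λ * ‖w‖ := by
          congr 1
          rw [← euclid_norm (φ w)]
          simp
          rfl
  -- apply the mean value inequality on the Euclidean ball
  set u : E := φ.symm (C₀ *ᵥ (x - x₀)) with hu
  have hunorm : ‖u‖ = Mnorm M₀ (x - x₀) := by rw [mnorm_eq M₀ C₀ hCM₀]
  have huball : u ∈ Metric.closedBall (0 : E) δ₀ := by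
    simp only [Metric.mem_closedBall, dist_zero_right, hunorm]
    exact hx
  have h0ball : (0 : E) ∈ Metric.closedBall (0 : E) δ₀ := by
    simp [hδ₀.le]
  have hdiff : ∀ v ∈ Metric.closedBall (0 : E) δ₀, DifferentiableAt ℝ g v :=
    fun v _ => (hgderiv v).differentiableAt
  have hmv := (convex_closedBall (0 : E) δ₀).norm_image_sub_le_of_norm_fderiv_le
    hdiff hbound h0ball huball
  -- identify the endpoints
  have hgu : g u = φ.symm (C₁ *ᵥ f x) := by
    have hpu : p u = x := by
      rw [hp, hu]
      simp only [ContinuousLinearEquiv.apply_symm_apply]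
      rw [mulVec_mulVec, hC₀inv', one_mulVec, add_sub_cancel]
    show Tout (f (p u)) = _
    rw [hpu]; rfl
  have hg0 : g 0 = φ.symm (C₁ *ᵥ f x₀) := by
    have hp0 : p 0 = x₀ := by
      rw [hp]
      simp [mulVec_zero]
    show Tout (f (p 0)) = _
    rw [hp0]; rfl
  have hsub : g u - g 0 = φ.symm (C₁ *ᵥ (f x - f x₀)) := by
    rw [hgu, hg0, mulVec_sub, map_sub]
  rw [hgu, hg0, ← map_sub, ← mulVec_sub] at hmv
  simp only [Mball, Set.mem_setOf_eq]
  rw [mnorm_eq M₁ C₁ hCM₁]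
  calc ‖(φ.symm (C₁ *ᵥ (f x - f x₀)) : E)‖ ≤ Λ * ‖u - 0‖ := hmv
    _ = Λ * ‖u‖ := by rw [sub_zero]
    _ ≤ Λ * δ₀ := by
        apply mul_le_mul_of_nonneg_left _ hΛpos.le
        rw [hunorm]; exact hx
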